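/- Let $K = i\Delta$ be a Hermitian Hilbert–Schmidt kernel on $L^2(M)$ with purely imaginary kernel (so nonzero eigenvalues come in pairs $\pm\lambda_k$ with eigenfunctions $T_k$, $\overline{T_k}$). Then the kernel decomposes as $i\Delta(x,y) = \sum_{k:\lambda_k>0} \lambda_k\big(T_k(x)\overline{T_k(y)} - \overline{T_k(x)} T_k(y)\big)$, with convergence in $L^2(M\times M)$. -/

import Mathlib

open MeasureTheory ComplexConjugate Filter
open scoped InnerProductSpace ENNReal NNReal

noncomputable section

namespace SJaux

variable {α : Type*} [MeasurableSpace α] {ν : Measure α}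

lemma memL2_conj {f : α → ℂ} (hf : MemLp f 2 ν) : MemLp (fun x => conj (f x)) 2 ν :=
  MemLp.of_le hf (RCLike.continuous_conj.comp_aestronglyMeasurable hf.1)
    (Filter.Eventually.of_forall fun x => by simp)

lemma integrable_sq_norm {f : α → ℂ} (hf : MemLp f 2 ν) :
    Integrable (fun x => ‖f x‖ ^ 2) ν :=
  (memLp_two_iff_integrable_sq_norm hf.1).mp hf

lemma integrable_mul2 {f g : α → ℂ} (hf : MemLp f 2 ν) (hg : MemLp g 2 ν) :
    Integrable (fun x => f x * g x) ν := by
  refine Integrable.mono' ((integrable_sq_norm hf).add (integrable_sq_norm hg)) (hf.1.mul hg.1) ?_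
  refine Filter.Eventually.of_forall fun x => ?_
  have h1 := norm_nonneg (f x); have h2 := norm_nonneg (g x)
  simp only [Pi.add_apply, norm_mul]
  nlinarith

lemma cauchy_schwarz2 {f g : α → ℂ} (hf : MemLp f 2 ν) (hg : MemLp g 2 ν) :
    ‖∫ x, f x * g x ∂ν‖ ^ 2 ≤ (∫ x, ‖f x‖ ^ 2 ∂ν) * (∫ x, ‖g x‖ ^ 2 ∂ν) := by
  have h2 : (2 : ℝ).HolderConjugate 2 := Real.HolderConjugate.two_two
  have hof : (2 : ℝ≥0∞) = ENNReal.ofReal (2 : ℝ) := by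
    simp [ENNReal.ofReal_ofNat]
  have hH := MeasureTheory.integral_mul_norm_le_Lp_mul_Lq (μ := ν) h2 (hof ▸ hf) (hof ▸ hg)
  set A := ∫ x, ‖f x‖ ^ 2 ∂ν with hA
  set B := ∫ x, ‖g x‖ ^ 2 ∂ν with hB
  have hA0 : 0 ≤ A := integral_nonneg fun x => sq_nonneg _
  have hB0 : 0 ≤ B := integral_nonneg fun x => sq_nonneg _
  have hrA : ∫ x, ‖f x‖ ^ (2:ℝ) ∂ν = A := by
    rw [hA]; exact integral_congr_ae (Filter.Eventually.of_forall fun x => Real.rpow_two _)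
  have hrB : ∫ x, ‖g x‖ ^ (2:ℝ) ∂ν = B := by
    rw [hB]; exact integral_congr_ae (Filter.Eventually.of_forall fun x => Real.rpow_two _)
  rw [hrA, hrB] at hH
  have h1 : ‖∫ x, f x * g x ∂ν‖ ≤ ∫ x, ‖f x‖ * ‖g x‖ ∂ν := by
    refine (norm_integral_le_integral_norm _).trans_eq ?_
    exact integral_congr_ae (Filter.Eventually.of_forall fun x => norm_mul _ _)
  have h3 : ‖∫ x, f x * g x ∂ν‖ ≤ A ^ (1/2 : ℝ) * B ^ (1/2 : ℝ) := h1.trans hH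
  have h4 := pow_le_pow_left₀ (norm_nonneg _) h3 2
  refine h4.trans_eq ?_
  rw [mul_pow, ← Real.rpow_natCast (A ^ (1/2 : ℝ)) 2, ← Real.rpow_natCast (B ^ (1/2 : ℝ)) 2,
    ← Real.rpow_mul hA0, ← Real.rpow_mul hB0]
  norm_num

lemma inner_toLp {f g : α → ℂ} (hf : MemLp f 2 ν) (hg : MemLp g 2 ν) :
    ⟪hf.toLp f, hg.toLp g⟫_ℂ = ∫ x, conj (f x) * g x ∂ν := by
  rw [MeasureTheory.L2.inner_def]
  refine integral_congr_ae ?_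
  filter_upwards [hf.coeFn_toLp, hg.coeFn_toLp] with x h1 h2
  rw [h1, h2, RCLike.inner_apply, mul_comm]

lemma norm_sq_eq_integral (w : Lp ℂ 2 ν) : ‖w‖ ^ 2 = ∫ x, ‖w x‖ ^ 2 ∂ν := by
  rw [← inner_self_eq_norm_sq (𝕜 := ℂ), MeasureTheory.L2.inner_def,
    ← integral_re (MeasureTheory.L2.integrable_inner (𝕜 := ℂ) w w)]
  refine integral_congr_ae (Filter.Eventually.of_forall fun x => ?_)
  simp only []
  rw [RCLike.inner_apply, RCLike.mul_conj, ← RCLike.ofReal_pow, RCLike.ofReal_re]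

/-- The combined family of eigenfunctions and their conjugates. -/
def uF {M : Type*} (T : ℕ → M → ℂ) : ℕ ⊕ ℕ → M → ℂ :=
  Sum.elim T fun k x => conj (T k x)

/-- The combined eigenvalues. -/
def lbF (lam : ℕ → ℝ) : ℕ ⊕ ℕ → ℝ := Sum.elim lam fun k => -lam k

/-- Tensor products of the combined family. -/
def tF {M : Type*} (T : ℕ → M → ℂ) (a b : ℕ ⊕ ℕ) : M × M → ℂ :=
  fun p => uF T a p.1 * conj (uF T b p.2)

/-- Enumeration of `ℕ ⊕ ℕ` by `ℕ`. -/
def σF : ℕ → ℕ ⊕ ℕ := fun n => if Even n then Sum.inl (n / 2) else Sum.inr (n / 2)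

lemma σF_even (k : ℕ) : σF (2 * k) = Sum.inl k := by
  have h : Even (2 * k) := even_two_mul k
  simp only [σF, h, if_true]
  congr 1
  omega

lemma σF_odd (k : ℕ) : σF (2 * k + 1) = Sum.inr k := by
  have h : ¬ Even (2 * k + 1) := by rw [Nat.even_iff]; omega
  simp only [σF, h, if_false]
  congr 1
  omega

lemma σF_inj : Function.Injective σF := by
  intro m n h
  by_cases hm : Even m <;> by_cases hn : Even n <;>
      simp only [σF, hm, hn, if_true, if_false] at h
  · rw [Sum.inl.injEq] at h
    rw [Nat.even_iff] at hm hn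
    omega
  · exact absurd h (by simp)
  · exact absurd h (by simp)
  · rw [Sum.inr.injEq] at h
    rw [Nat.even_iff] at hm
    rw [Nat.even_iff] at hn
    omega

lemma σF_surj : Function.Surjective σF := by
  rintro (k | k)
  · exact ⟨2 * k, σF_even k⟩
  · exact ⟨2 * k + 1, σF_odd k⟩

end SJaux

end

open SJaux

noncomputable section

open MeasureTheory

theorem kernel_positive_negative_decomposition
    {M : Type*} [MeasurableSpace M] (μ : Measure M) [SigmaFinite μ]
    (K : M → M → ℂ) (T : ℕ → M → ℂ) (lam : ℕ → ℝ)
    (hK2 : MemLp (fun p : M × M => K p.1 p.2) 2 (μ.prod μ))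
    (hHerm : ∀ x y, (starRingEnd ℂ) (K y x) = K x y)
    (hImag : ∀ x y, (starRingEnd ℂ) (K x y) = -K x y)
    (hTL2 : ∀ k, MemLp (T k) 2 μ)
    (hpos : ∀ k, 0 < lam k)
    (horth : ∀ j k, ∫ x, (starRingEnd ℂ) (T j x) * T k x ∂μ = if j = k then 1 else 0)
    (horth2 : ∀ j k, ∫ x, T j x * T k x ∂μ = 0)
    (heig : ∀ k x, ∫ y, K x y * T k y ∂μ = (lam k : ℂ) * T k x)
    (hcomplete : ∀ f : M → ℂ, MemLp f 2 μ →
      (∀ k, ∫ x, (starRingEnd ℂ) (T k x) * f x ∂μ = 0) →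
      (∀ k, ∫ x, T k x * f x ∂μ = 0) → f =ᵐ[μ] 0) :
    Filter.Tendsto (fun N : ℕ => ∫ x, ∫ y,
        ‖K x y - ∑ k ∈ Finset.range N, (lam k : ℂ) *
          (T k x * (starRingEnd ℂ) (T k y) - (starRingEnd ℂ) (T k x) * T k y)‖ ^ 2 ∂μ ∂μ)
      Filter.atTop (nhds 0) := by
  classical
  -- membership of the combined family in L²
  have hu : ∀ a, MemLp (uF T a) 2 μ := by
    rintro (k | k)
    · exact hTL2 k
    · exact SJaux.memL2_conj (hTL2 k)
  -- orthonormality of the combined family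
  have horthU : ∀ a c, ∫ x, conj (uF T a x) * uF T c x ∂μ = if a = c then 1 else 0 := by
    rintro (j | j) (k | k)
    · simpa [uF] using horth j k
    · have h1 : ∫ x, conj (T j x) * conj (T k x) ∂μ = conj (∫ x, T j x * T k x ∂μ) := by
        rw [← integral_conj]
        exact integral_congr_ae (Filter.Eventually.of_forall fun x => by
          beta_reduce; rw [map_mul])
      simp only [uF, Sum.elim_inl, Sum.elim_inr]
      rw [h1, horth2 j k]
      simp
    · have h1 : ∫ x, conj (conj (T j x)) * T k x ∂μ = ∫ x, T j x * T k x ∂μ :=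
        integral_congr_ae (Filter.Eventually.of_forall fun x => by
          beta_reduce; rw [Complex.conj_conj])
      simp only [uF, Sum.elim_inl, Sum.elim_inr]
      rw [h1, horth2 j k]
      simp
    · have h1 : ∫ x, conj (conj (T j x)) * conj (T k x) ∂μ
          = conj (∫ x, conj (T j x) * T k x ∂μ) := by
        rw [← integral_conj]
        exact integral_congr_ae (Filter.Eventually.of_forall fun x => by
          beta_reduce; rw [map_mul, Complex.conj_conj])
      simp only [uF, Sum.elim_inl, Sum.elim_inr]
      rw [h1, horth j k]
      by_cases h : j = k <;> simp [h]
  -- eigenvalue equation for the combined family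
  have heigU : ∀ b x, ∫ y, K x y * uF T b y ∂μ = ((lbF lam b : ℝ) : ℂ) * uF T b x := by
    rintro (k | k) x
    · simpa [uF, lbF] using heig k x
    · simp only [uF, lbF, Sum.elim_inr]
      calc ∫ y, K x y * conj (T k y) ∂μ
          = ∫ y, conj (conj (K x y) * T k y) ∂μ := by
            exact integral_congr_ae (Filter.Eventually.of_forall fun y => by
              beta_reduce; rw [map_mul, Complex.conj_conj])
        _ = conj (∫ y, conj (K x y) * T k y ∂μ) := integral_conj
        _ = conj (∫ y, -(K x y * T k y) ∂μ) := by
            congr 1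
            exact integral_congr_ae (Filter.Eventually.of_forall fun y => by
              beta_reduce; rw [show (starRingEnd ℂ) (K x y) = -K x y from hImag x y]; ring)
        _ = conj (-(∫ y, K x y * T k y ∂μ)) := by rw [integral_neg]
        _ = ((-lam k : ℝ) : ℂ) * conj (T k x) := by
            rw [heig k x]
            simp only [map_neg, map_mul, Complex.conj_ofReal]
            push_cast
            ring
  -- tensors are in L² of the product
  have ht2 : ∀ a b, MemLp (tF T a b) 2 (μ.prod μ) := by
    intro a b
    have hmeas : AEStronglyMeasurable (tF T a b) (μ.prod μ) :=
      ((hu a).1.comp_fst).mul ((SJaux.memL2_conj (hu b)).1.comp_snd)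
    refine (memLp_two_iff_integrable_sq_norm hmeas).mpr ?_
    have hint : Integrable (fun p : M × M => ‖uF T a p.1‖ ^ 2 * ‖uF T b p.2‖ ^ 2) (μ.prod μ) :=
      (SJaux.integrable_sq_norm (hu a)).mul_prod (SJaux.integrable_sq_norm (hu b))
    refine hint.congr (Filter.Eventually.of_forall fun p => ?_)
    simp [tF, norm_mul, mul_pow]
  -- inner products of tensor basis vectors
  have hBinner : ∀ a b c d, (⟪(ht2 a b).toLp (tF T a b), (ht2 c d).toLp (tF T c d)⟫_ℂ)
      = (if a = c then (1:ℂ) else 0) * (if b = d then 1 else 0) := by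
    intro a b c d
    rw [SJaux.inner_toLp]
    calc ∫ p, conj (tF T a b p) * tF T c d p ∂(μ.prod μ)
        = ∫ p, (fun x => conj (uF T a x) * uF T c x) p.1
            * (fun y => uF T b y * conj (uF T d y)) p.2 ∂(μ.prod μ) := by
          refine integral_congr_ae (Filter.Eventually.of_forall fun p => ?_)
          beta_reduce
          simp only [tF, map_mul, Complex.conj_conj]
          try ring
      _ = (∫ x, conj (uF T a x) * uF T c x ∂μ) * (∫ y, uF T b y * conj (uF T d y) ∂μ) :=
          integral_prod_mul (μ := μ) (ν := μ) (fun x => conj (uF T a x) * uF T c x)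
            (fun y => uF T b y * conj (uF T d y))
      _ = (if a = c then 1 else 0) * (if b = d then 1 else 0) := by
          rw [horthU a c]
          have h2 : ∫ y, uF T b y * conj (uF T d y) ∂μ
              = conj (∫ y, conj (uF T b y) * uF T d y ∂μ) := by
            rw [← integral_conj]
            refine integral_congr_ae (Filter.Eventually.of_forall fun y => ?_)
            beta_reduce
            rw [map_mul, Complex.conj_conj]
            try ring
          rw [h2, horthU b d]
          by_cases h : b = d <;> simp [h]
  set B : (ℕ ⊕ ℕ) × (ℕ ⊕ ℕ) → Lp ℂ 2 (μ.prod μ) :=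
    fun i => (ht2 i.1 i.2).toLp (tF T i.1 i.2) with hBdef
  have honB : Orthonormal ℂ B := by
    rw [orthonormal_iff_ite]
    intro i j
    simp only [hBdef]
    rw [hBinner i.1 i.2 j.1 j.2]
    by_cases h1 : i.1 = j.1 <;> by_cases h2 : i.2 = j.2 <;> simp [h1, h2, Prod.ext_iff]
  -- Fourier coefficients of the kernel
  have hKcoef : ∀ a b, (⟪B (a, b), hK2.toLp (fun p : M × M => K p.1 p.2)⟫_ℂ)
      = if a = b then ((lbF lam b : ℝ) : ℂ) else 0 := by
    intro a b
    simp only [hBdef]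
    rw [SJaux.inner_toLp]
    have hint : Integrable (fun p : M × M => conj (tF T a b p) * K p.1 p.2) (μ.prod μ) :=
      SJaux.integrable_mul2 (SJaux.memL2_conj (ht2 a b)) hK2
    calc ∫ p, conj (tF T a b p) * K p.1 p.2 ∂(μ.prod μ)
        = ∫ x, ∫ y, conj (tF T a b (x, y)) * K x y ∂μ ∂μ :=
          (integral_integral (f := fun x y => conj (tF T a b (x, y)) * K x y) hint).symm
      _ = ∫ x, ((lbF lam b : ℝ) : ℂ) * (conj (uF T a x) * uF T b x) ∂μ := by
          refine integral_congr_ae (Filter.Eventually.of_forall fun x => ?_)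
          beta_reduce
          calc ∫ y, conj (tF T a b (x, y)) * K x y ∂μ
              = ∫ y, conj (uF T a x) * (K x y * uF T b y) ∂μ := by
                refine integral_congr_ae (Filter.Eventually.of_forall fun y => ?_)
                beta_reduce
                simp only [tF, map_mul, Complex.conj_conj]
                ring
            _ = conj (uF T a x) * ∫ y, K x y * uF T b y ∂μ := integral_const_mul _ _
            _ = ((lbF lam b : ℝ) : ℂ) * (conj (uF T a x) * uF T b x) := by
                rw [heigU b x]; ring
      _ = ((lbF lam b : ℝ) : ℂ) * ∫ x, conj (uF T a x) * uF T b x ∂μ := integral_const_mul _ _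
      _ = if a = b then ((lbF lam b : ℝ) : ℂ) else 0 := by
          rw [horthU a b]
          by_cases h : a = b <;> simp [h]
  -- totality of the tensor family
  have htot : (Submodule.span ℂ (Set.range B))ᗮ = ⊥ := by
    rw [Submodule.eq_bot_iff]
    intro v hv
    have hvi : ∀ a b, (⟪B (a, b), v⟫_ℂ) = 0 := fun a b =>
      (Submodule.mem_orthogonal _ v).mp hv _ (Submodule.subset_span ⟨(a, b), rfl⟩)
    have hg : MemLp (⇑v) 2 (μ.prod μ) := Lp.memLp v
    -- orthogonality to all tensors, in integral form
    have hg0 : ∀ a b, ∫ p, conj (uF T a p.1) * (uF T b p.2 * v p) ∂(μ.prod μ) = 0 := by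
      intro a b
      have h1 : (⟪B (a, b), v⟫_ℂ) = ∫ p, conj (tF T a b p) * v p ∂(μ.prod μ) := by
        simp only [hBdef]
        rw [MeasureTheory.L2.inner_def]
        refine integral_congr_ae ?_
        filter_upwards [(ht2 a b).coeFn_toLp] with p hp
        rw [RCLike.inner_apply, hp, mul_comm]
      have h2 := (h1.symm.trans (hvi a b))
      calc ∫ p, conj (uF T a p.1) * (uF T b p.2 * v p) ∂(μ.prod μ)
          = ∫ p, conj (tF T a b p) * v p ∂(μ.prod μ) := by
            refine integral_congr_ae (Filter.Eventually.of_forall fun p => ?_)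
            beta_reduce
            simp only [tF, map_mul, Complex.conj_conj]
            ring
        _ = 0 := h2
    have hsqg : Integrable (fun p : M × M => ‖v p‖ ^ 2) (μ.prod μ) :=
      SJaux.integrable_sq_norm hg
    have hsliceInt : ∀ᵐ x ∂μ, Integrable (fun y => ‖v (x, y)‖ ^ 2) μ := hsqg.prod_right_ae
    have hsliceMeas : ∀ᵐ x ∂μ, AEStronglyMeasurable (fun y => v (x, y)) μ :=
      hg.1.prodMk_left
    have hsliceL2 : ∀ᵐ x ∂μ, MemLp (fun y => v (x, y)) 2 μ := by
      filter_upwards [hsliceInt, hsliceMeas] with x h1 h2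
      exact (memLp_two_iff_integrable_sq_norm h2).mpr h1
    -- the partial integrals
    set c : (ℕ ⊕ ℕ) → M → ℂ := fun b x => ∫ y, uF T b y * v (x, y) ∂μ with hcdef
    have hcmeas : ∀ b, AEStronglyMeasurable (c b) μ := by
      intro b
      have hm : AEStronglyMeasurable (fun p : M × M => uF T b p.2 * v p) (μ.prod μ) :=
        ((hu b).1.comp_snd).mul hg.1
      exact hm.integral_prod_right'
    have hcL2 : ∀ b, MemLp (c b) 2 μ := by
      intro b
      refine (memLp_two_iff_integrable_sq_norm (hcmeas b)).mpr ?_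
      refine Integrable.mono' ((hsqg.integral_prod_left).const_mul
        (∫ y, ‖uF T b y‖ ^ 2 ∂μ)) ((hcmeas b).norm.pow 2) ?_
      filter_upwards [hsliceL2] with x hx
      have hcs := SJaux.cauchy_schwarz2 (hu b) hx
      calc ‖‖c b x‖ ^ 2‖ = ‖c b x‖ ^ 2 := by rw [Real.norm_of_nonneg (sq_nonneg _)]
        _ ≤ (∫ y, ‖uF T b y‖ ^ 2 ∂μ) * ∫ y, ‖v (x, y)‖ ^ 2 ∂μ := hcs
    have hcorth : ∀ a b, ∫ x, conj (uF T a x) * c b x ∂μ = 0 := by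
      intro a b
      have hint2 : Integrable (fun p : M × M => conj (uF T a p.1) * (uF T b p.2 * v p))
          (μ.prod μ) := by
        have hi : Integrable (fun p : M × M => conj (tF T a b p) * v p) (μ.prod μ) :=
          SJaux.integrable_mul2 (SJaux.memL2_conj (ht2 a b)) hg
        refine hi.congr (Filter.Eventually.of_forall fun p => ?_)
        beta_reduce
        simp only [tF, map_mul, Complex.conj_conj]
        ring
      calc ∫ x, conj (uF T a x) * c b x ∂μ
          = ∫ x, ∫ y, conj (uF T a x) * (uF T b y * v (x, y)) ∂μ ∂μ := by
            refine integral_congr_ae (Filter.Eventually.of_forall fun x => ?_)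
            beta_reduce
            rw [hcdef]
            exact (integral_const_mul _ _).symm
        _ = ∫ p, conj (uF T a p.1) * (uF T b p.2 * v p) ∂(μ.prod μ) :=
            integral_integral (f := fun x y => conj (uF T a x) * (uF T b y * v (x, y))) hint2
        _ = 0 := hg0 a b
    have hczero : ∀ b, c b =ᵐ[μ] 0 := by
      intro b
      refine hcomplete (c b) (hcL2 b) (fun k => hcorth (Sum.inl k) b) (fun k => ?_)
      have h := hcorth (Sum.inr k) b
      calc ∫ x, T k x * c b x ∂μ
          = ∫ x, conj (uF T (Sum.inr k) x) * c b x ∂μ := by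
            refine integral_congr_ae (Filter.Eventually.of_forall fun x => ?_)
            beta_reduce
            simp [uF]
        _ = 0 := h
    have hae : ∀ᵐ x ∂μ, ∀ b, c b x = 0 := by
      rw [MeasureTheory.ae_all_iff]
      intro b
      filter_upwards [hczero b] with x hx
      simpa using hx
    have hslice0 : ∀ᵐ x ∂μ, (∫ y, ‖v (x, y)‖ ^ 2 ∂μ) = 0 := by
      filter_upwards [hae, hsliceL2] with x h1 h2
      have hzero : (fun y => v (x, y)) =ᵐ[μ] 0 := by
        refine hcomplete _ h2 (fun k => ?_) (fun k => ?_)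
        · have := h1 (Sum.inr k)
          rw [hcdef] at this
          calc ∫ y, conj (T k y) * v (x, y) ∂μ
              = ∫ y, uF T (Sum.inr k) y * v (x, y) ∂μ := by
                refine integral_congr_ae (Filter.Eventually.of_forall fun y => ?_)
                beta_reduce
                simp [uF]
            _ = 0 := this
        · have := h1 (Sum.inl k)
          rw [hcdef] at this
          exact this
      calc ∫ y, ‖v (x, y)‖ ^ 2 ∂μ = ∫ y, (0:ℝ) ∂μ := by
            refine integral_congr_ae ?_
            filter_upwards [hzero] with y hy
            simp only [Pi.zero_apply] at hy
            simp [hy]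
        _ = 0 := integral_zero _ _
    have hnorm : ‖v‖ ^ 2 = 0 := by
      rw [SJaux.norm_sq_eq_integral v]
      calc ∫ p, ‖v p‖ ^ 2 ∂(μ.prod μ)
          = ∫ x, ∫ y, ‖v (x, y)‖ ^ 2 ∂μ ∂μ :=
            (integral_integral (f := fun x y => ‖v (x, y)‖ ^ 2) hsqg).symm
        _ = ∫ x, (0:ℝ) ∂μ := integral_congr_ae hslice0
        _ = 0 := integral_zero _ _
    have : ‖v‖ = 0 := by
      have := sq_eq_zero_iff.mp hnorm
      exact this
    exact norm_eq_zero.mp this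
  -- the Hilbert basis of tensors
  set Bb : HilbertBasis ((ℕ ⊕ ℕ) × (ℕ ⊕ ℕ)) ℂ (Lp ℂ 2 (μ.prod μ)) :=
    HilbertBasis.mkOfOrthogonalEqBot honB htot with hBbdef
  have hBb : ⇑Bb = B := by
    rw [hBbdef]
    exact HilbertBasis.coe_mkOfOrthogonalEqBot honB htot
  set κ := hK2.toLp (fun p : M × M => K p.1 p.2) with hκdef
  have hsum : HasSum (fun i : (ℕ ⊕ ℕ) × (ℕ ⊕ ℕ) =>
      (if i.1 = i.2 then ((lbF lam i.2 : ℝ) : ℂ) else 0) • B i) κ := by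
    have h := Bb.hasSum_repr κ
    refine h.congr_fun fun i => ?_
    obtain ⟨a, b⟩ := i
    rw [Bb.repr_apply_apply, hBb, hKcoef a b]
  set ι : ℕ → (ℕ ⊕ ℕ) × (ℕ ⊕ ℕ) := fun n => (σF n, σF n) with hιdef
  have hιinj : Function.Injective ι := by
    intro m n h
    rw [hιdef] at h
    exact σF_inj (congrArg Prod.fst h)
  have hsupp : ∀ i ∉ Set.range ι,
      (if i.1 = i.2 then ((lbF lam i.2 : ℝ) : ℂ) else 0) • B i = 0 := by
    intro i hi
    have hne : i.1 ≠ i.2 := by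
      intro h
      apply hi
      obtain ⟨n, hn⟩ := σF_surj i.1
      refine ⟨n, ?_⟩
      rw [hιdef]
      have : (σF n, σF n) = (i.1, i.2) := by rw [hn, h]
      simpa using this
    simp [hne]
  have hsum2 : HasSum ((fun i : (ℕ ⊕ ℕ) × (ℕ ⊕ ℕ) =>
      (if i.1 = i.2 then ((lbF lam i.2 : ℝ) : ℂ) else 0) • B i) ∘ ι) κ :=
    (hιinj.hasSum_iff hsupp).mpr hsum
  have htend := hsum2.tendsto_sum_nat
  set Q : ℕ → Lp ℂ 2 (μ.prod μ) := fun N => ∑ k ∈ Finset.range N,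
    ((lam k : ℝ) : ℂ) • (B (Sum.inl k, Sum.inl k) - B (Sum.inr k, Sum.inr k)) with hQdef
  have hQeq : ∀ N, (∑ i ∈ Finset.range (2 * N), ((fun i : (ℕ ⊕ ℕ) × (ℕ ⊕ ℕ) =>
      (if i.1 = i.2 then ((lbF lam i.2 : ℝ) : ℂ) else 0) • B i) ∘ ι) i) = Q N := by
    intro N
    induction N with
    | zero => simp [hQdef]
    | succ n ih =>
      have h2 : 2 * (n + 1) = 2 * n + 1 + 1 := by ring
      have hstep : Q (n + 1) = Q n + ((lam n : ℝ) : ℂ) •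
          (B (Sum.inl n, Sum.inl n) - B (Sum.inr n, Sum.inr n)) := by
        simp only [hQdef]
        exact Finset.sum_range_succ _ n
      rw [h2, Finset.sum_range_succ, Finset.sum_range_succ, ih, hstep]
      have e1 : ι (2 * n) = (Sum.inl n, Sum.inl n) := by
        rw [hιdef]; beta_reduce; rw [σF_even n]
      have e2 : ι (2 * n + 1) = (Sum.inr n, Sum.inr n) := by
        rw [hιdef]; beta_reduce; rw [σF_odd n]
      simp only [Function.comp_apply, e1, e2, σF_even, σF_odd, if_pos rfl, lbF,
        Sum.elim_inl, Sum.elim_inr]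
      push_cast
      rw [smul_sub, neg_smul]
      abel
  have hQtend : Filter.Tendsto Q Filter.atTop (nhds κ) := by
    have h2 : Filter.Tendsto (fun N : ℕ => 2 * N) Filter.atTop Filter.atTop :=
      Filter.tendsto_atTop_atTop_of_monotone (fun a b h => by omega) (fun b => ⟨b, by omega⟩)
    have h3 := htend.comp h2
    exact h3.congr hQeq
  have hfinal : Filter.Tendsto (fun N => ‖κ - Q N‖ ^ 2) Filter.atTop (nhds 0) := by
    have h1 : Filter.Tendsto (fun N => κ - Q N) Filter.atTop (nhds (κ - κ)) :=
      tendsto_const_nhds.sub hQtend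
    rw [sub_self] at h1
    have h2 := h1.norm.pow 2
    simpa using h2
  -- identify the norms with the double integrals
  have hQcoe : ∀ N, ⇑(Q N) =ᵐ[μ.prod μ] (fun p => ∑ k ∈ Finset.range N, ((lam k : ℝ) : ℂ) *
      (tF T (Sum.inl k) (Sum.inl k) p - tF T (Sum.inr k) (Sum.inr k) p)) := by
    intro N
    induction N with
    | zero =>
      simp only [hQdef, Finset.range_zero, Finset.sum_empty]
      filter_upwards [Lp.coeFn_zero (E := ℂ) (p := 2) (μ := μ.prod μ)] with p hp
      simpa using hp
    | succ n ih =>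
      have hstep : Q (n + 1) = Q n + ((lam n : ℝ) : ℂ) •
          (B (Sum.inl n, Sum.inl n) - B (Sum.inr n, Sum.inr n)) := by
        rw [hQdef]
        exact Finset.sum_range_succ _ n
      rw [hstep]
      filter_upwards [Lp.coeFn_add (Q n) (((lam n : ℝ) : ℂ) •
          (B (Sum.inl n, Sum.inl n) - B (Sum.inr n, Sum.inr n))), ih,
        Lp.coeFn_smul ((lam n : ℝ) : ℂ)
          (B (Sum.inl n, Sum.inl n) - B (Sum.inr n, Sum.inr n)),
        Lp.coeFn_sub (B (Sum.inl n, Sum.inl n)) (B (Sum.inr n, Sum.inr n)),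
        (ht2 (Sum.inl n) (Sum.inl n)).coeFn_toLp, (ht2 (Sum.inr n) (Sum.inr n)).coeFn_toLp]
        with p h1 h2 h3 h4 h5 h6
      rw [h1, Finset.sum_range_succ]
      simp only [Pi.add_apply]
      rw [h2, h3]
      simp only [Pi.smul_apply]
      rw [h4]
      simp only [Pi.sub_apply]
      have h5' : (B (Sum.inl n, Sum.inl n) : M × M → ℂ) p = tF T (Sum.inl n) (Sum.inl n) p := by
        simp only [hBdef]
        exact h5
      have h6' : (B (Sum.inr n, Sum.inr n) : M × M → ℂ) p = tF T (Sum.inr n) (Sum.inr n) p := by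
        simp only [hBdef]
        exact h6
      rw [h5', h6', smul_eq_mul]
  refine hfinal.congr fun N => ?_
  have hsmem : MemLp (fun p : M × M => ∑ k ∈ Finset.range N, ((lam k : ℝ) : ℂ) *
      (tF T (Sum.inl k) (Sum.inl k) p - tF T (Sum.inr k) (Sum.inr k) p)) 2 (μ.prod μ) := by
    have h := memLp_finset_sum' (Finset.range N) (fun k (_ : k ∈ Finset.range N) =>
      (((ht2 (Sum.inl k) (Sum.inl k)).sub (ht2 (Sum.inr k) (Sum.inr k))).const_mul
        ((lam k : ℝ) : ℂ)))
    rwa [Finset.sum_fn] at h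
  have hIsq : Integrable (fun p : M × M => ‖K p.1 p.2 - ∑ k ∈ Finset.range N,
      ((lam k : ℝ) : ℂ) * (tF T (Sum.inl k) (Sum.inl k) p
        - tF T (Sum.inr k) (Sum.inr k) p)‖ ^ 2) (μ.prod μ) := by
    have h := SJaux.integrable_sq_norm (hK2.sub hsmem)
    refine h.congr (Filter.Eventually.of_forall fun p => ?_)
    simp [Pi.sub_apply]
  calc ‖κ - Q N‖ ^ 2
      = ∫ p, ‖(κ - Q N : Lp ℂ 2 (μ.prod μ)) p‖ ^ 2 ∂(μ.prod μ) := SJaux.norm_sq_eq_integral _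
    _ = ∫ p, ‖K p.1 p.2 - ∑ k ∈ Finset.range N, ((lam k : ℝ) : ℂ) *
          (tF T (Sum.inl k) (Sum.inl k) p - tF T (Sum.inr k) (Sum.inr k) p)‖ ^ 2
          ∂(μ.prod μ) := by
        refine integral_congr_ae ?_
        filter_upwards [Lp.coeFn_sub κ (Q N), hK2.coeFn_toLp, hQcoe N] with p h1 h2 h3
        rw [h1]
        simp only [Pi.sub_apply]
        have h2' : (κ : M × M → ℂ) p = K p.1 p.2 := by
          rw [hκdef]
          exact h2
        rw [h2', h3]
    _ = ∫ x, ∫ y, ‖K x y - ∑ k ∈ Finset.range N, ((lam k : ℝ) : ℂ) *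
          (tF T (Sum.inl k) (Sum.inl k) (x, y) - tF T (Sum.inr k) (Sum.inr k) (x, y))‖ ^ 2
          ∂μ ∂μ :=
        (integral_integral (f := fun x y => ‖K x y - ∑ k ∈ Finset.range N, ((lam k : ℝ) : ℂ) *
          (tF T (Sum.inl k) (Sum.inl k) (x, y)
            - tF T (Sum.inr k) (Sum.inr k) (x, y))‖ ^ 2) hIsq).symm
    _ = ∫ x, ∫ y, ‖K x y - ∑ k ∈ Finset.range N, (lam k : ℂ) *
          (T k x * (starRingEnd ℂ) (T k y) - (starRingEnd ℂ) (T k x) * T k y)‖ ^ 2 ∂μ ∂μ := by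
        refine integral_congr_ae (Filter.Eventually.of_forall fun x => ?_)
        beta_reduce
        refine integral_congr_ae (Filter.Eventually.of_forall fun y => ?_)
        beta_reduce
        have hsum_eq : (∑ k ∈ Finset.range N, ((lam k : ℝ) : ℂ) *
            (tF T (Sum.inl k) (Sum.inl k) (x, y) - tF T (Sum.inr k) (Sum.inr k) (x, y)))
            = ∑ k ∈ Finset.range N, (lam k : ℂ) *
            (T k x * (starRingEnd ℂ) (T k y) - (starRingEnd ℂ) (T k x) * T k y) :=
          Finset.sum_congr rfl fun k _ => by simp [tF, uF]
        rw [hsum_eq]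

end
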